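/- Assume R₀ > 1 and let (X*,Y*,Z*) be the endemic equilibrium. For the function V(X,Y,Z) = X − X* log(X/X*) + Y − Y* log(Y/Y*) + (δX*/μ_v)(Z − Z* log(Z/Z*)), its derivative along the vector field X' = μ_h(1−X) − δXZ, Y' = δXZ − (μ_h+γ)Y, Z' = σ(1−Z)Y − μ_v Z equals μ_h[3 − X* − X − X*/X] + (σδX*/μ_v) Y [2Z* − Z − Z*/Z] − δ X Z Y*/Y + (μ_h+γ)(R₀X*(1−Z*)−1)Y, where the last term vanishes because R₀(1−Z*) = 1/X*. -/

import Mathlib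

theorem lyapunov_derivative_endemic_identity
    (μh μv γ δ σ : ℝ) (hμh : 0 < μh) (hμv : 0 < μv) (hγ : 0 < γ)
    (hδ : 0 < δ) (hσ : 0 < σ)
    (R₀ D₀ Xs Ys Zs : ℝ)
    (hR₀ : R₀ = σ * δ / (μv * (μh + γ))) (hR₀gt : 1 < R₀)
    (hD₀ : D₀ = μh / δ)
    (hXs : Xs = (1 + R₀ * D₀) / (R₀ * (1 + D₀)))
    (hYs : Ys = μh / (μh + γ) * (1 - Xs))
    (hZs : Zs = D₀ * (1 - Xs) / Xs)
    (X Y Z : ℝ) (hX : 0 < X) (hY : 0 < Y) (hZ : 0 < Z) :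
    (1 - Xs / X) * (μh * (1 - X) - δ * X * Z)
      + (1 - Ys / Y) * (δ * X * Z - (μh + γ) * Y)
      + (δ * Xs / μv) * (1 - Zs / Z) * (σ * (1 - Z) * Y - μv * Z)
    = μh * (3 - Xs - X - Xs / X)
      + (σ * δ * Xs / μv) * Y * (2 * Zs - Z - Zs / Z)
      - δ * X * Z * Ys / Y
      + (μh + γ) * (R₀ * Xs * (1 - Zs) - 1) * Y
    ∧ R₀ * (1 - Zs) = 1 / Xs := by
  have hR₀pos : 0 < R₀ := lt_trans one_pos hR₀gt
  have hD₀pos : 0 < D₀ := hD₀ ▸ div_pos hμh hδ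
  have hXspos : 0 < Xs := by
    rw [hXs]; exact div_pos (by positivity) (by positivity)
  have hXsne : Xs ≠ 0 := ne_of_gt hXspos
  have hμγ : (μh + γ) ≠ 0 := by positivity
  have hR₀' : μv * (μh + γ) * R₀ = σ * δ := by
    rw [hR₀]; field_simp
  have e1 : δ * Xs * Zs = μh * (1 - Xs) := by
    rw [hZs, hD₀]; field_simp
  have e2 : (μh + γ) * Ys = μh * (1 - Xs) := by
    rw [hYs]; field_simp
  constructor
  · field_simp
    linear_combination (μv*X*Y*Z)*(e1+e2) - X*Y^2*Z*Xs*(1-Zs)*hR₀'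
  · rw [hZs, hD₀]
    rw [hD₀] at hXs
    field_simp at hXs ⊢
    linear_combination hXs
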